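/- Let m ≥ 3, n = 2^m − 1, and w = 2^{m−1} − 1. Let H ∈ 𝔽₂^{n×n} be a matrix such that every row and every column of H has Hamming weight exactly w, and such that the supports of any two distinct rows of H intersect in exactly 2^{m−2} − 1 positions. Then every nonzero pseudocodeword x ∈ K(H) satisfies w_AWGNC(x) ≥ 3 + 1/(2^{m−2} − 1); in particular w_AWGNC^min(H) > 3, and for m = 3 (so n = 7) one has w_AWGNC^min(H) ≥ 4. -/

import Mathlib

open Matrix BigOperators Finset

section Defs

variable {J I : Type*} [Fintype J] [Fintype I] [DecidableEq I]

/-- The support of row `j` of a binary matrix `H`. -/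
def rowSupp (H : Matrix J I (ZMod 2)) (j : J) : Finset I :=
  Finset.univ.filter fun i => H j i = 1

/-- The fundamental cone of a binary matrix `H`. -/
def fundCone (H : Matrix J I (ZMod 2)) : Set (I → ℝ) :=
  {x | (∀ i, 0 ≤ x i) ∧
    ∀ j : J, ∀ ℓ ∈ rowSupp H j, x ℓ ≤ ∑ i ∈ (rowSupp H j).erase ℓ, x i}

/-- BEC pseudoweight: size of the support. -/
noncomputable def wBEC (x : I → ℝ) : ℝ := ({i | x i ≠ 0}.ncard : ℝ)

/-- AWGNC pseudoweight. -/
noncomputable def wAWGNC (x : I → ℝ) : ℝ := (∑ i, x i) ^ 2 / ∑ i, x i ^ 2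

/-- Max-fractional weight. -/
noncomputable def wMaxFrac (x : I → ℝ) : ℝ := (∑ i, x i) / sSup (Set.range x)

/-- `H` is a parity-check matrix of the code `C`. -/
def IsParityCheck (H : Matrix J I (ZMod 2)) (C : Submodule (ZMod 2) (I → ZMod 2)) : Prop :=
  ∀ c, c ∈ C ↔ H.mulVec c = 0

/-- Minimum Hamming distance of a code. -/
noncomputable def minDist (C : Submodule (ZMod 2) (I → ZMod 2)) : ℕ :=
  sInf {d | ∃ c ∈ C, c ≠ 0 ∧ hammingNorm c = d}

/-- Minimum pseudoweight of `H` w.r.t. pseudoweight function `w`: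
the infimum of `w` over all nonzero pseudocodewords (`⊤` if there are none). -/
noncomputable def minPW (w : (I → ℝ) → ℝ) (H : Matrix J I (ZMod 2)) : EReal :=
  sInf ((fun x => (w x : EReal)) '' (fundCone H \ {0}))

/-- The chain (connectivity) relation associated with a binary matrix whose rows
have weight 2: `i` and `i'` are related iff they are equal or joined by a chain of rows
whose supports are exactly consecutive pairs. -/
def chainRel (H : Matrix J I (ZMod 2)) (i i' : I) : Prop :=
  i = i' ∨ ∃ ℓ : ℕ, 1 ≤ ℓ ∧ ∃ (c : Fin (ℓ + 1) → I) (r : Fin ℓ → J),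
    c 0 = i ∧ c (Fin.last ℓ) = i' ∧
    ∀ t : Fin ℓ, rowSupp H (r t) = {c t.castSucc, c t.succ}

/-- The 0-1 real matrix associated with a binary matrix. -/
def toRealMatrix (H : Matrix J I (ZMod 2)) : Matrix J I ℝ :=
  Matrix.of fun j i => if H j i = 1 then (1 : ℝ) else 0

/-- The Tanner graph of a binary matrix. -/
def tannerGraph (H : Matrix J I (ZMod 2)) : SimpleGraph (J ⊕ I) :=
  SimpleGraph.fromRel fun u v => ∃ j i, u = Sum.inl j ∧ v = Sum.inr i ∧ H j i = 1

end Defs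

/-- The multiset of (real) eigenvalues, with multiplicity, of a real square matrix:
the real roots of its characteristic polynomial. -/
noncomputable def eigMult {ι : Type*} [Fintype ι] [DecidableEq ι] (A : Matrix ι ι ℝ) :
    Multiset ℝ :=
  A.charpoly.roots

section FinDefs

variable {n : ℕ}

/-- The non-increasing rearrangement of a real vector. -/
noncomputable def sortDesc (x : Fin n → ℝ) : Fin n → ℝ :=
  fun i => x (Tuple.sort (fun j => -x j) i)

/-- `Φ(ξ) = ∫₀^ξ φ`, where `φ(ξ) = x'_i` for `i - 1 < ξ ≤ i` and `x'` is the
non-increasing rearrangement of `x`. -/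
noncomputable def bigPhi (x : Fin n → ℝ) (ξ : ℝ) : ℝ :=
  ∑ i : Fin n, sortDesc x i * min 1 (max 0 (ξ - (i : ℝ)))

/-- BSC pseudoweight: `2 Φ⁻¹(Φ(n)/2)`. -/
noncomputable def wBSC (x : Fin n → ℝ) : ℝ :=
  2 * sInf {ξ : ℝ | bigPhi x (n : ℝ) / 2 ≤ bigPhi x ξ}

/-- The pseudocodeword redundancy of a code `C` w.r.t. the pseudoweight function `w`:
the smallest number of rows of a parity-check matrix `H` of `C` whose minimum
pseudoweight equals the minimum distance of `C` (`⊤` if there is no such matrix). -/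
noncomputable def pcRedundancy (w : (Fin n → ℝ) → ℝ)
    (C : Submodule (ZMod 2) (Fin n → ZMod 2)) : ℕ∞ :=
  sInf {k : ℕ∞ | ∃ (m : ℕ) (H : Matrix (Fin m) (Fin n) (ZMod 2)),
    k = (m : ℕ∞) ∧ IsParityCheck H C ∧ minPW w H = ((minDist C : ℝ) : EReal)}

end FinDefs

/-- Let `m ≥ 3`, `n = 2^m - 1`, `w = 2^(m-1) - 1`, and let `H` be an `n × n`
binary matrix all of whose rows and columns have Hamming weight exactly `w`, such that the
supports of any two distinct rows intersect in exactly `2^(m-2) - 1` positions.  Then every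
nonzero pseudocodeword `x ∈ K(H)` satisfies `w_AWGNC(x) ≥ 3 + 1/(2^(m-2) - 1)`;
in particular `w_AWGNC^min(H) > 3`, and for `m = 3` one has `w_AWGNC^min(H) ≥ 4`. -/
theorem statement14 (m : ℕ) (hm : 3 ≤ m)
    (H : Matrix (Fin (2 ^ m - 1)) (Fin (2 ^ m - 1)) (ZMod 2))
    (hrow : ∀ j, (rowSupp H j).card = 2 ^ (m - 1) - 1)
    (hcol : ∀ i, (Finset.univ.filter fun j => H j i = 1).card = 2 ^ (m - 1) - 1)
    (hint : ∀ j j', j ≠ j' → (rowSupp H j ∩ rowSupp H j').card = 2 ^ (m - 2) - 1) :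
    (∀ x ∈ fundCone H \ {0}, 3 + 1 / ((2 : ℝ) ^ (m - 2) - 1) ≤ wAWGNC x) ∧
    ((3 : ℝ) : EReal) < minPW wAWGNC H ∧
    (m = 3 → ((4 : ℝ) : EReal) ≤ minPW wAWGNC H) := by
  obtain ⟨a, ha1, rfl⟩ : ∃ a, 1 ≤ a ∧ m = a + 2 := ⟨m - 2, by omega, by omega⟩
  have e1 : a + 2 - 1 = a + 1 := rfl
  have e2 : a + 2 - 2 = a := rfl
  rw [e1] at hrow hcol
  rw [e2] at hint
  simp only [e2]
  set T : ℝ := (2:ℝ) ^ a with hTdef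
  have hT2 : (2:ℝ) ≤ T := by
    calc (2:ℝ) = 2 ^ 1 := (pow_one 2).symm
    _ ≤ 2 ^ a := by exact pow_le_pow_right₀ one_le_two ha1
  have hT1 : (0:ℝ) < T - 1 := by linarith
  have hwcast : ((2 ^ (a+1) - 1 : ℕ) : ℝ) = 2 * T - 1 := by
    have h : (1:ℕ) ≤ 2 ^ (a+1) := Nat.one_le_two_pow
    rw [Nat.cast_sub h]
    push_cast
    rw [hTdef]
    ring
  have hlcast : ((2 ^ a - 1 : ℕ) : ℝ) = T - 1 := by
    have h : (1:ℕ) ≤ 2 ^ a := Nat.one_le_two_pow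
    rw [Nat.cast_sub h]
    push_cast
    rw [hTdef]
  set A : Matrix (Fin (2 ^ (a+2) - 1)) (Fin (2 ^ (a+2) - 1)) ℝ := toRealMatrix H with hAdef
  have hA1 : ∀ j i, A j i = if H j i = 1 then 1 else 0 := fun _ _ => rfl
  have hrowsum : ∀ j, ∑ i, A j i = 2 * T - 1 := by
    intro j
    have : ∑ i, A j i = ((rowSupp H j).card : ℝ) := by
      simp [hA1, rowSupp]
    rw [this, hrow j, hwcast]
  have hcolsum : ∀ i, ∑ j, A j i = 2 * T - 1 := by
    intro i
    have : ∑ j, A j i = (((Finset.univ.filter fun j => H j i = 1)).card : ℝ) := by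
      simp [hA1]
    rw [this, hcol i, hwcast]
  have hprod : ∀ j j' i, A j i * A j' i = if i ∈ rowSupp H j ∩ rowSupp H j' then (1:ℝ) else 0 := by
    intro j j' i
    simp only [hA1, Finset.mem_inter, rowSupp, Finset.mem_filter, Finset.mem_univ, true_and]
    by_cases h1 : H j i = 1 <;> by_cases h2 : H j' i = 1 <;> simp [h1, h2]
  have hAAT : ∀ j j', ∑ i, A j i * A j' i = (if j = j' then T else 0) + (T - 1) := by
    intro j j'
    have hc : ∑ i, A j i * A j' i = ((rowSupp H j ∩ rowSupp H j').card : ℝ) := by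
      simp only [hprod]
      have hfe : Finset.univ.filter (fun i => i ∈ rowSupp H j ∩ rowSupp H j')
          = rowSupp H j ∩ rowSupp H j' := by
        ext i; simp
      rw [Finset.sum_boole, hfe]
    by_cases h : j = j'
    · subst h
      rw [hc, Finset.inter_self, hrow j, hwcast, if_pos rfl]
      ring
    · rw [hc, hint j j' h, hlcast, if_neg h, zero_add]
  set Jm : Matrix (Fin (2 ^ (a+2) - 1)) (Fin (2 ^ (a+2) - 1)) ℝ := Matrix.of fun _ _ => 1 with hJmdef
  have hAJ : A * Jm = (2*T-1) • Jm := by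
    ext j i
    simp only [Matrix.mul_apply, Matrix.smul_apply, hJmdef, Matrix.of_apply, mul_one,
      smul_eq_mul]
    exact hrowsum j
  have hJA : Jm * A = (2*T-1) • Jm := by
    ext j i
    simp only [Matrix.mul_apply, Matrix.smul_apply, hJmdef, Matrix.of_apply, one_mul,
      smul_eq_mul, mul_one]
    exact hcolsum i
  have hM : A * Aᵀ = T • (1 : Matrix _ _ ℝ) + (T-1) • Jm := by
    ext j j'
    simp only [Matrix.mul_apply, Matrix.transpose_apply, Matrix.add_apply, Matrix.smul_apply,
      Matrix.one_apply, hJmdef, Matrix.of_apply, smul_eq_mul, mul_one]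
    rw [hAAT j j']
    by_cases h : j = j' <;> simp [h]
  have hPD : (T • (1 : Matrix (Fin (2 ^ (a+2) - 1)) (Fin (2 ^ (a+2) - 1)) ℝ) + (T-1) • Jm).PosDef := by
    rw [Matrix.posDef_iff_dotProduct_mulVec]
    constructor
    · show _ = _
      ext j j'
      simp only [Matrix.conjTranspose_apply, Matrix.add_apply, Matrix.smul_apply,
        Matrix.one_apply, hJmdef, Matrix.of_apply, smul_eq_mul, mul_one, star_trivial]
      by_cases h : j = j' <;> simp [h, eq_comm]
    · intro x hx
      obtain ⟨i0, hi0⟩ := Function.ne_iff.mp hx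
      have hi0' : x i0 ≠ 0 := by simpa using hi0
      have hQ : 0 < ∑ i, (x i)^2 :=
        Finset.sum_pos' (fun i _ => sq_nonneg _)
          ⟨i0, Finset.mem_univ _, lt_of_le_of_ne (sq_nonneg _) (Ne.symm (pow_ne_zero 2 hi0'))⟩
      have hmv : ∀ j, ((T • (1 : Matrix (Fin (2 ^ (a+2) - 1)) (Fin (2 ^ (a+2) - 1)) ℝ) + (T-1) • Jm) *ᵥ x) j
          = T * x j + (T-1) * ∑ i, x i := by
        intro j
        simp only [Matrix.mulVec, dotProduct, Matrix.add_apply, Matrix.smul_apply,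
          Matrix.one_apply, hJmdef, Matrix.of_apply, smul_eq_mul, mul_one]
        have hterm : ∀ i, ((T * if j = i then 1 else 0) + (T - 1)) * x i
            = (if j = i then T * x i else 0) + (T - 1) * x i := by
          intro i
          by_cases h : j = i
          · simp [h]; ring
          · simp [h]
        rw [Finset.sum_congr rfl fun i _ => hterm i, Finset.sum_add_distrib,
          Finset.sum_ite_eq, ← Finset.mul_sum]
        simp
      have hdot : dotProduct (star x) ((T • (1 : Matrix (Fin (2 ^ (a+2) - 1)) (Fin (2 ^ (a+2) - 1)) ℝ) + (T-1) • Jm) *ᵥ x)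
          = T * ∑ i, (x i)^2 + ((T-1) * (∑ i, x i)) * (∑ i, x i) := by
        simp only [dotProduct, hmv, star_trivial]
        calc ∑ j, x j * (T * x j + (T-1) * ∑ i, x i)
            = ∑ j, (T * (x j)^2 + ((T-1) * ∑ i, x i) * x j) :=
              Finset.sum_congr rfl fun j _ => by ring
          _ = T * ∑ i, (x i)^2 + ((T-1) * (∑ i, x i)) * (∑ i, x i) := by
              rw [Finset.sum_add_distrib, ← Finset.mul_sum, ← Finset.mul_sum]
      rw [hdot]
      have h1 : 0 < T * ∑ i, (x i)^2 := by
        apply mul_pos (by linarith) hQ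
      have h2 : 0 ≤ ((T-1) * (∑ i, x i)) * (∑ i, x i) := by
        rw [mul_assoc]
        exact mul_nonneg (by linarith) (mul_self_nonneg _)
      linarith
  have hdet : IsUnit A.det := by
    have h1 : 0 < (T • (1 : Matrix (Fin (2 ^ (a+2) - 1)) (Fin (2 ^ (a+2) - 1)) ℝ) + (T-1) • Jm).det :=
      hPD.det_pos
    have h2 : A.det * A.det = (T • (1 : Matrix (Fin (2 ^ (a+2) - 1)) (Fin (2 ^ (a+2) - 1)) ℝ) + (T-1) • Jm).det := by
      calc A.det * A.det = A.det * Aᵀ.det := by rw [Matrix.det_transpose]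
      _ = (A * Aᵀ).det := (Matrix.det_mul _ _).symm
      _ = _ := by rw [hM]
    refine isUnit_iff_ne_zero.mpr fun h => ?_
    rw [h, mul_zero] at h2
    exact absurd h2.symm (ne_of_gt h1)
  have hw0 : (2*T - 1) ≠ 0 := by linarith
  have hAinvJ : A⁻¹ * Jm = (2*T-1)⁻¹ • Jm := by
    have h := congrArg (fun B => A⁻¹ * B) hAJ
    rw [← Matrix.mul_assoc, Matrix.nonsing_inv_mul A hdet, Matrix.one_mul, Matrix.mul_smul] at h
    calc A⁻¹ * Jm = (2*T-1)⁻¹ • ((2*T-1) • (A⁻¹ * Jm)) := by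
          rw [smul_smul, inv_mul_cancel₀ hw0, one_smul]
      _ = (2*T-1)⁻¹ • Jm := by rw [← h]
  have hATA : Aᵀ * A = T • (1 : Matrix _ _ ℝ) + (T-1) • Jm := by
    have hstep : Aᵀ * A = A⁻¹ * (A * Aᵀ) * A := by
      rw [← Matrix.mul_assoc, Matrix.nonsing_inv_mul A hdet, Matrix.one_mul]
    calc Aᵀ * A = A⁻¹ * (A * Aᵀ) * A := hstep
    _ = A⁻¹ * (T • (1 : Matrix _ _ ℝ)) * A + A⁻¹ * ((T-1) • Jm) * A := by
        rw [hM, Matrix.mul_add, Matrix.add_mul]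
    _ = T • (1 : Matrix _ _ ℝ) + (T-1) • Jm := by
        rw [Matrix.mul_smul, Matrix.mul_one, Matrix.smul_mul, Matrix.nonsing_inv_mul A hdet,
          Matrix.mul_smul, hAinvJ, smul_smul, Matrix.smul_mul, hJA, smul_smul]
        congr 1
        rw [mul_assoc, inv_mul_cancel₀ hw0, mul_one]
  have hATAe : ∀ i i', ∑ j, A j i * A j i' = (if i = i' then T else 0) + (T-1) := by
    intro i i'
    have h := congrFun (congrFun hATA i) i'
    simp only [Matrix.mul_apply, Matrix.transpose_apply, Matrix.add_apply, Matrix.smul_apply,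
      Matrix.one_apply, hJmdef, Matrix.of_apply, smul_eq_mul, mul_one, mul_ite, mul_zero] at h
    exact h
  have hrowx : ∀ (x : Fin (2 ^ (a+2) - 1) → ℝ) j, ∑ i ∈ rowSupp H j, x i = ∑ i, A j i * x i := by
    intro x j
    rw [rowSupp, Finset.sum_filter]
    exact Finset.sum_congr rfl fun i _ => by by_cases h : H j i = 1 <;> simp [hA1, h]
  have hkey : ∀ x : Fin (2 ^ (a+2) - 1) → ℝ,
      ∑ j, (∑ i ∈ rowSupp H j, x i)^2 = T * (∑ i, (x i)^2) + (T-1) * (∑ i, x i)^2 := by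
    intro x
    calc ∑ j, (∑ i ∈ rowSupp H j, x i)^2
        = ∑ j, ∑ i, ∑ i', (A j i * x i) * (A j i' * x i') := by
          refine Finset.sum_congr rfl fun j _ => ?_
          rw [hrowx, sq, Finset.sum_mul_sum]
      _ = ∑ i, ∑ i', (∑ j, A j i * A j i') * (x i * x i') := by
          rw [Finset.sum_comm]
          refine Finset.sum_congr rfl fun i _ => ?_
          rw [Finset.sum_comm]
          refine Finset.sum_congr rfl fun i' _ => ?_
          rw [Finset.sum_mul]
          exact Finset.sum_congr rfl fun j _ => by ring
      _ = ∑ i, ∑ i', ((if i = i' then T * (x i * x i') else 0) + (T-1) * (x i * x i')) := by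
          refine Finset.sum_congr rfl fun i _ => Finset.sum_congr rfl fun i' _ => ?_
          rw [hATAe]
          by_cases h : i = i'
          · simp [h]; ring
          · simp [h]
      _ = T * (∑ i, (x i)^2) + (T-1) * (∑ i, x i)^2 := by
          simp only [Finset.sum_add_distrib]
          congr 1
          · rw [Finset.mul_sum]
            refine Finset.sum_congr rfl fun i _ => ?_
            rw [Finset.sum_ite_eq, if_pos (Finset.mem_univ i)]
            ring
          · rw [sq, Finset.sum_mul_sum, Finset.mul_sum]
            refine Finset.sum_congr rfl fun i _ => ?_
            rw [Finset.mul_sum]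
  have hcolsq : ∀ x : Fin (2 ^ (a+2) - 1) → ℝ,
      ∑ j, ∑ i ∈ rowSupp H j, (x i)^2 = (2*T-1) * ∑ i, (x i)^2 := by
    intro x
    have h : ∀ j, ∑ i ∈ rowSupp H j, (x i)^2 = ∑ i, A j i * (x i)^2 :=
      fun j => hrowx (fun i => (x i)^2) j
    simp only [h]
    rw [Finset.sum_comm]
    calc ∑ i, ∑ j, A j i * (x i)^2
        = ∑ i, (∑ j, A j i) * (x i)^2 := by
          refine Finset.sum_congr rfl fun i _ => (Finset.sum_mul _ _ _).symm
      _ = ∑ i, (2*T-1) * (x i)^2 := by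
          refine Finset.sum_congr rfl fun i _ => by rw [hcolsum]
      _ = (2*T-1) * ∑ i, (x i)^2 := (Finset.mul_sum _ _ _).symm
  have hmain : ∀ x ∈ fundCone H \ {0}, 3 + 1 / (T - 1) ≤ wAWGNC x := by
    rintro x ⟨⟨hx0, hxI⟩, hxne⟩
    have hxne' : x ≠ 0 := hxne
    obtain ⟨i0, hi0⟩ := Function.ne_iff.mp hxne'
    have hi0' : x i0 ≠ 0 := by simpa using hi0
    have hQ : 0 < ∑ i, (x i)^2 :=
      Finset.sum_pos' (fun i _ => sq_nonneg _)
        ⟨i0, Finset.mem_univ _, lt_of_le_of_ne (sq_nonneg _) (Ne.symm (pow_ne_zero 2 hi0'))⟩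
    have hrows : ∀ j, 2 * ∑ i ∈ rowSupp H j, (x i)^2 ≤ (∑ i ∈ rowSupp H j, x i)^2 := by
      intro j
      have hS : ∀ ℓ ∈ rowSupp H j, 2 * x ℓ ≤ ∑ i ∈ rowSupp H j, x i := by
        intro ℓ hℓ
        have h1 := hxI j ℓ hℓ
        have h2 : ∑ i ∈ (rowSupp H j).erase ℓ, x i = (∑ i ∈ rowSupp H j, x i) - x ℓ :=
          Finset.sum_erase_eq_sub hℓ
        linarith
      calc 2 * ∑ i ∈ rowSupp H j, (x i)^2
          = ∑ i ∈ rowSupp H j, (2 * x i) * x i := by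
            rw [Finset.mul_sum]; exact Finset.sum_congr rfl fun i _ => by ring
        _ ≤ ∑ i ∈ rowSupp H j, (∑ i' ∈ rowSupp H j, x i') * x i :=
            Finset.sum_le_sum fun i hi => mul_le_mul_of_nonneg_right (hS i hi) (hx0 i)
        _ = (∑ i ∈ rowSupp H j, x i)^2 := by rw [← Finset.mul_sum, sq]
    have hsum : 2 * ((2*T-1) * ∑ i, (x i)^2) ≤ T * (∑ i, (x i)^2) + (T-1) * (∑ i, x i)^2 := by
      calc 2 * ((2*T-1) * ∑ i, (x i)^2)
          = ∑ j, 2 * ∑ i ∈ rowSupp H j, (x i)^2 := by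
            rw [← Finset.mul_sum, hcolsq x]
        _ ≤ ∑ j, (∑ i ∈ rowSupp H j, x i)^2 := Finset.sum_le_sum fun j _ => hrows j
        _ = T * (∑ i, (x i)^2) + (T-1) * (∑ i, x i)^2 := hkey x
    have hineq : (3*T - 2) * ∑ i, (x i)^2 ≤ (T-1) * (∑ i, x i)^2 := by linarith
    have heq : 3 + 1 / (T-1) = (3*T-2) / (T-1) := by field_simp; ring
    show 3 + 1 / (T - 1) ≤ (∑ i, x i)^2 / ∑ i, (x i)^2
    rw [heq, div_le_div_iff₀ hT1 hQ]
    linarith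
  refine ⟨hmain, ?_, ?_⟩
  · have hlb : (((3 + 1/(T-1) : ℝ)) : EReal) ≤ minPW wAWGNC H := by
      refine le_sInf ?_
      rintro b ⟨x, hx, rfl⟩
      exact EReal.coe_le_coe_iff.mpr (hmain x hx)
    refine lt_of_lt_of_le ?_ hlb
    refine EReal.coe_lt_coe_iff.mpr ?_
    have : 0 < 1 / (T - 1) := by positivity
    linarith
  · intro hm3
    have ha : a = 1 := by omega
    subst ha
    have hT : T = 2 := by rw [hTdef]; norm_num
    have h4 : (4:ℝ) = 3 + 1/(T-1) := by rw [hT]; norm_num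
    have hlb : (((3 + 1/(T-1) : ℝ)) : EReal) ≤ minPW wAWGNC H := by
      refine le_sInf ?_
      rintro b ⟨x, hx, rfl⟩
      exact EReal.coe_le_coe_iff.mpr (hmain x hx)
    rw [h4]
    exact hlb
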